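/- Let k and n be positive integers with k ≤ n. Then gcd(2^k + 1, 2^n − 1) = (2^{gcd(2k,n)} − 1) / (2^{gcd(k,n)} − 1). In particular, if n is odd, or if n ≡ 2 (mod 4) and k is even, then gcd(2^k + 1, 2^n − 1) = 1. -/
import Mathlib

/-- gcd of Mersenne numbers. -/
lemma mersenne_gcd (m n : ℕ) :
    Nat.gcd (2 ^ m - 1) (2 ^ n - 1) = 2 ^ Nat.gcd m n - 1 := by
  induction m, n using Nat.gcd.induction with
  | H0 n => simp
  | H1 m n hm ih =>
    have hq : 2 ^ m - 1 ∣ 2 ^ (m * (n / m)) - 1 := by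
      have := Nat.sub_dvd_pow_sub_pow (2 ^ m) 1 (n / m)
      simpa [← pow_mul] using this
    have hdvd : 2 ^ m - 1 ∣ 2 ^ n - 2 ^ (n % m) := by
      obtain ⟨t, ht⟩ := hq
      refine ⟨2 ^ (n % m) * t, ?_⟩
      have hn : 2 ^ n = 2 ^ (n % m) * 2 ^ (m * (n / m)) := by
        rw [← pow_add, Nat.mod_add_div]
      have h1 : 1 ≤ 2 ^ (m * (n / m)) := Nat.one_le_two_pow
      have h2 : 1 ≤ 2 ^ m := Nat.one_le_two_pow
      calc 2 ^ n - 2 ^ (n % m) = 2 ^ (n % m) * (2 ^ (m * (n / m)) - 1) := by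
            rw [Nat.mul_sub, hn]; ring_nf
        _ = 2 ^ (n % m) * ((2 ^ m - 1) * t) := by rw [ht]
        _ = (2 ^ m - 1) * (2 ^ (n % m) * t) := by ring
    obtain ⟨t, ht⟩ := hdvd
    have hle : 2 ^ (n % m) ≤ 2 ^ n := Nat.pow_le_pow_right (by norm_num) (Nat.mod_le n m)
    have h1 : 1 ≤ 2 ^ (n % m) := Nat.one_le_two_pow
    have key : 2 ^ n - 1 = (2 ^ (n % m) - 1) + t * (2 ^ m - 1) := by
      rw [mul_comm]; omega
    rw [key, Nat.gcd_add_mul_right_right, Nat.gcd_comm, ih, Nat.gcd_rec m n]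

lemma mersenne_dvd {a b : ℕ} (h : a ∣ b) : 2 ^ a - 1 ∣ 2 ^ b - 1 := by
  obtain ⟨c, rfl⟩ := h
  simpa [← pow_mul] using Nat.sub_dvd_pow_sub_pow (2 ^ a) 1 c

lemma mersenne_fac (k : ℕ) : (2 ^ k + 1) * (2 ^ k - 1) = 2 ^ (2 * k) - 1 := by
  have h1 : 1 ≤ 2 ^ k := Nat.one_le_two_pow
  obtain ⟨b, hb⟩ : ∃ b, 2 ^ k = b + 1 := ⟨2 ^ k - 1, by omega⟩
  have h2 : 2 ^ (2 * k) = 2 ^ k * 2 ^ k := by rw [two_mul, pow_add]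
  have h3 : (b + 1) * (b + 1) = (b + 1 + 1) * b + 1 := by ring
  rw [h2, hb, Nat.add_sub_cancel, h3, Nat.add_sub_cancel]

theorem gcd_two_pow_add_one (k n : ℕ) (hk : 0 < k) (hkn : k ≤ n) :
    Nat.gcd (2 ^ k + 1) (2 ^ n - 1) =
      (2 ^ Nat.gcd (2 * k) n - 1) / (2 ^ Nat.gcd k n - 1) ∧
    ((Odd n ∨ (n % 4 = 2 ∧ Even k)) → Nat.gcd (2 ^ k + 1) (2 ^ n - 1) = 1) := by
  have hn0 : 0 < n := lt_of_lt_of_le hk hkn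
  set g := Nat.gcd k n with hg
  set g2 := Nat.gcd (2 * k) n with hg2
  have hg0 : 0 < g := Nat.gcd_pos_of_pos_left n hk
  have hgk : g ∣ k := Nat.gcd_dvd_left k n
  have hgn : g ∣ n := Nat.gcd_dvd_right k n
  have hgg2 : g ∣ g2 := Nat.dvd_gcd (hgk.mul_left 2) hgn
  have hg22g : g2 ∣ 2 * g := by
    have : Nat.gcd (2 * k) (2 * n) = 2 * g := Nat.gcd_mul_left 2 k n
    exact this ▸ Nat.dvd_gcd (Nat.gcd_dvd_left _ _) ((Nat.gcd_dvd_right (2*k) n).mul_left 2)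
  have hgeq : g2 = g ∨ g2 = 2 * g := by
    obtain ⟨c, hc⟩ := hgg2
    have hc2 : c ∣ 2 := by
      have : g * c ∣ g * 2 := by rw [← hc, mul_comm g 2]; exact hg22g
      exact (mul_dvd_mul_iff_left hg0.ne').mp this
    rcases (Nat.dvd_prime Nat.prime_two).mp hc2 with rfl | rfl
    · left; omega
    · right; omega
  set d := Nat.gcd (2 ^ k + 1) (2 ^ n - 1) with hd
  have hd1 : d ∣ 2 ^ k + 1 := Nat.gcd_dvd_left _ _
  have hd2 : d ∣ 2 ^ n - 1 := Nat.gcd_dvd_right _ _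
  have hdodd : ¬ 2 ∣ d := by
    intro h2
    have h2n : 2 ∣ 2 ^ n := dvd_pow_self 2 hn0.ne'
    have h1 : 1 ≤ 2 ^ n := Nat.one_le_two_pow
    have := h2.trans hd2
    omega
  have hd2k : d ∣ 2 ^ (2 * k) - 1 := by
    rw [← mersenne_fac k]; exact hd1.mul_right _
  have hdg2 : d ∣ 2 ^ g2 - 1 := by
    rw [← mersenne_gcd (2 * k) n]; exact Nat.dvd_gcd hd2k hd2
  -- case g2 = g gives d = 1
  have case1 : g2 = g → d = 1 := by
    intro hcase
    have hdk : d ∣ 2 ^ k - 1 := (hcase ▸ hdg2).trans (mersenne_dvd hgk)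
    have h1 : 1 ≤ 2 ^ k := Nat.one_le_two_pow
    have hdvd2 : d ∣ 2 := by
      have := Nat.dvd_sub hd1 hdk
      have heq : 2 ^ k + 1 - (2 ^ k - 1) = 2 := by omega
      rwa [heq] at this
    rcases (Nat.dvd_prime Nat.prime_two).mp hdvd2 with h | h
    · exact h
    · exact absurd (h ▸ dvd_refl d) hdodd
  refine ⟨?_, ?_⟩
  · rcases hgeq with hcase | hcase
    · rw [case1 hcase, hcase, Nat.div_self (by have := Nat.one_lt_two_pow_iff.mpr hg0.ne'; omega)]
    · -- g2 = 2g, show d = 2^g + 1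
      have h2gn : 2 * g ∣ n := hcase ▸ Nat.gcd_dvd_right (2 * k) n
      obtain ⟨m, hm⟩ := hgk
      have hmodd : Odd m := by
        rw [Nat.odd_iff]
        by_contra h
        have h2 : 2 ∣ m := by omega
        obtain ⟨j, rfl⟩ := h2
        have : 2 * g ∣ k := ⟨j, by rw [hm]; ring⟩
        have : 2 * g ∣ g := Nat.dvd_gcd this h2gn
        have := Nat.le_of_dvd hg0 this
        omega
      have hA : 2 ^ g + 1 ∣ 2 ^ k + 1 := by
        rw [hm, pow_mul]
        simpa using Odd.nat_add_dvd_pow_add_pow (2 ^ g) 1 hmodd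
      have hB0 : 2 ^ g + 1 ∣ 2 ^ (2 * g) - 1 := ⟨_, (mersenne_fac g).symm⟩
      have hB : 2 ^ g + 1 ∣ 2 ^ n - 1 := hB0.trans (mersenne_dvd h2gn)
      have hle : 2 ^ g + 1 ∣ d := Nat.dvd_gcd hA hB
      have hcop : Nat.Coprime d (2 ^ g - 1) := by
        have h1 : 1 ≤ 2 ^ k := Nat.one_le_two_pow
        set e := Nat.gcd d (2 ^ g - 1) with he
        have he1 : e ∣ 2 ^ k + 1 := (Nat.gcd_dvd_left _ _).trans hd1
        have he2 : e ∣ 2 ^ k - 1 := (Nat.gcd_dvd_right _ _).trans (mersenne_dvd (Nat.gcd_dvd_left k n))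
        have hdvd2 : e ∣ 2 := by
          have := Nat.dvd_sub he1 he2
          have heq : 2 ^ k + 1 - (2 ^ k - 1) = 2 := by omega
          rwa [heq] at this
        have heodd : ¬ 2 ∣ e := fun h => hdodd (h.trans (Nat.gcd_dvd_left _ _))
        rcases (Nat.dvd_prime Nat.prime_two).mp hdvd2 with h | h
        · exact h
        · exact absurd (h ▸ dvd_refl e) heodd
      have hge : d ∣ 2 ^ g + 1 := by
        have : d ∣ (2 ^ g + 1) * (2 ^ g - 1) := by
          rw [mersenne_fac g]; exact hcase ▸ hdg2
        exact hcop.dvd_of_dvd_mul_right this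
      have hdeq : d = 2 ^ g + 1 := Nat.dvd_antisymm hge hle
      rw [hdeq, hcase, ← mersenne_fac g, Nat.mul_div_cancel _ (by have := Nat.one_lt_two_pow_iff.mpr hg0.ne'; omega)]
  · intro h
    have hgeq' : g2 = g := by
      rcases h with hodd | ⟨hn4, hkeven⟩
      · have hcop : Nat.Coprime 2 n := Nat.coprime_two_left.mpr hodd
        exact Nat.Coprime.gcd_mul_left_cancel k hcop
      · obtain ⟨j, hj⟩ := hkeven
        have hjk : k = 2 * j := by omega
        obtain ⟨m, hmn⟩ : ∃ m, n = 2 * m := ⟨n / 2, by omega⟩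
        have hmodd : Odd m := by rw [Nat.odd_iff]; omega
        have hcop : Nat.Coprime 2 m := Nat.coprime_two_left.mpr hmodd
        rw [hg2, hg, hjk, hmn]
        rw [show 2 * (2 * j) = 2 * 2 * j by ring, mul_assoc]
        rw [Nat.gcd_mul_left 2 (2 * j) m, Nat.gcd_mul_left 2 j m,
          Nat.Coprime.gcd_mul_left_cancel j hcop]
    rw [case1 hgeq']
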